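/- Let G be an amply regular graph with parameters (n, d, α, β) with α = 1 and β > 1, and let xy be an edge with common neighbor set Δ_{xy} = {x₀}. Then W₁(μ_x^{1/(d+1)}, μ_y^{1/(d+1)}) ≤ (d − 2)/(d + 1). -/

import Mathlib

open Finset SimpleGraph

variable {V : Type*} [Fintype V] [DecidableEq V]

/-- A graph is amply regular with parameters `(n, d, a, b)` if it is `d`-regular on `n`
vertices, adjacent vertices have exactly `a` common neighbors, and vertices at distance 2
have exactly `b` common neighbors. -/
def SimpleGraph.IsAmplyRegular (G : SimpleGraph V) [DecidableRel G.Adj]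
    (n d a b : ℕ) : Prop :=
  Fintype.card V = n ∧ G.IsRegularOfDegree d ∧
    (∀ x y, G.Adj x y → (G.neighborFinset x ∩ G.neighborFinset y).card = a) ∧
    (∀ x y, G.dist x y = 2 → (G.neighborFinset x ∩ G.neighborFinset y).card = b)

/-- The measure `μ_x^p` giving mass `p` to `x` and `(1-p)/deg x` to each neighbor of `x`. -/
noncomputable def muMeasure (G : SimpleGraph V) [DecidableRel G.Adj] (p : ℝ) (x : V) :
    V → ℝ :=
  fun v => if v = x then p else if G.Adj x v then (1 - p) / (G.degree x : ℝ) else 0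

/-- `pi` is a transport plan between `mu1` and `mu2`. -/
def IsTransportPlan (mu1 mu2 : V → ℝ) (pi : V → V → ℝ) : Prop :=
  (∀ u v, 0 ≤ pi u v) ∧ (∀ u, ∑ v, pi u v = mu1 u) ∧ (∀ v, ∑ u, pi u v = mu2 v)

/-- The 1-Wasserstein distance between two measures w.r.t. the graph distance. -/
noncomputable def W1 (G : SimpleGraph V) (mu1 mu2 : V → ℝ) : ℝ :=
  sInf {c : ℝ | ∃ pi, IsTransportPlan mu1 mu2 pi ∧
    c = ∑ u, ∑ v, (G.dist u v : ℝ) * pi u v}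

/-- The Lin-Lu-Yau curvature of an edge of a `d`-regular graph, via the idleness
`p = 1/(d+1)` formula of Bourne et al. -/
noncomputable def kappaLLY (G : SimpleGraph V) [DecidableRel G.Adj] (d : ℕ) (x y : V) :
    ℝ :=
  ((d + 1 : ℝ) / d) *
    (1 - W1 G (muMeasure G (1 / (d + 1 : ℝ)) x) (muMeasure G (1 / (d + 1 : ℝ)) y))

/-- `N_x = Γ(x) \ ({y} ∪ Γ(y))`. -/
def Nset (G : SimpleGraph V) [DecidableRel G.Adj] (x y : V) : Finset V :=
  G.neighborFinset x \ insert y (G.neighborFinset y)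

/-- `Δ_{xy} = Γ(x) ∩ Γ(y)`. -/
def Dset (G : SimpleGraph V) [DecidableRel G.Adj] (x y : V) : Finset V :=
  G.neighborFinset x ∩ G.neighborFinset y

/-- In an amply regular graph with `α = 1 < β`, for any edge `xy` with `Δ_{xy} = {x₀}`,
`W₁(μ_x^{1/(d+1)}, μ_y^{1/(d+1)}) ≤ (d - 2)/(d + 1)`. -/
theorem stmt4 (G : SimpleGraph V) [DecidableRel G.Adj] {n d a b : ℕ}
    (h : G.IsAmplyRegular n d a b) (ha : a = 1) (hb : 1 < b)
    (x y : V) (hxy : G.Adj x y) (x₀ : V) (hΔ : Dset G x y = {x₀}) :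
    W1 G (muMeasure G (1 / (d + 1 : ℝ)) x) (muMeasure G (1 / (d + 1 : ℝ)) y) ≤
      ((d : ℝ) - 2) / (d + 1) := by
  obtain ⟨-, hreg, hα, hβ⟩ := h
  subst ha
  set p : ℝ := 1 / (d + 1 : ℝ) with hp
  set q : ℝ := 1 / ((b : ℝ) - 1) with hq
  set Nx : Finset V := Nset G x y with hNxdef
  set Ny : Finset V := Nset G y x with hNydef
  -- basic facts about x₀
  have hx0 : x₀ ∈ Dset G x y := by rw [hΔ]; exact mem_singleton_self x₀
  have hxx0 : G.Adj x x₀ := by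
    have := (mem_inter.mp hx0).1; rwa [mem_neighborFinset] at this
  have hyx0 : G.Adj y x₀ := by
    have := (mem_inter.mp hx0).2; rwa [mem_neighborFinset] at this
  have hynex0 : y ≠ x₀ := fun hh => G.loopless.irrefl y (hh ▸ hyx0)
  have hxnex0 : x ≠ x₀ := fun hh => G.loopless.irrefl x (hh ▸ hxx0)
  have hD : ∀ u, G.Adj x u → G.Adj y u → u = x₀ := by
    intro u h1 h2
    have hu : u ∈ Dset G x y := by
      simp only [Dset, mem_inter, mem_neighborFinset]; exact ⟨h1, h2⟩
    rwa [hΔ, mem_singleton] at hu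
  -- no vertex of N_x is adjacent to x₀
  have hx0nadj : ∀ u, G.Adj x u → u ≠ y → ¬ G.Adj x₀ u := by
    intro u h1 h2 h3
    obtain ⟨z, hz⟩ := card_eq_one.mp (hα x x₀ hxx0)
    have hyz : y ∈ ({z} : Finset V) := by
      rw [← hz]; simp only [mem_inter, mem_neighborFinset]; exact ⟨hxy, hyx0.symm⟩
    have huz : u ∈ ({z} : Finset V) := by
      rw [← hz]; simp only [mem_inter, mem_neighborFinset]; exact ⟨h1, h3⟩
    exact h2 (by rw [mem_singleton] at hyz huz; rw [huz, hyz])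
  have hy0nadj : ∀ v, G.Adj y v → v ≠ x → ¬ G.Adj x₀ v := by
    intro v h1 h2 h3
    obtain ⟨z, hz⟩ := card_eq_one.mp (hα y x₀ hyx0)
    have hxz : x ∈ ({z} : Finset V) := by
      rw [← hz]; simp only [mem_inter, mem_neighborFinset]; exact ⟨hxy.symm, hxx0.symm⟩
    have hvz : v ∈ ({z} : Finset V) := by
      rw [← hz]; simp only [mem_inter, mem_neighborFinset]; exact ⟨h1, h3⟩
    exact h2 (by rw [mem_singleton] at hxz hvz; rw [hvz, hxz])
  -- membership in Nx, Ny
  have hNx : ∀ u, u ∈ Nx ↔ G.Adj x u ∧ u ≠ y ∧ ¬ G.Adj y u := by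
    intro u
    simp only [hNxdef, Nset, mem_sdiff, mem_insert, mem_neighborFinset, not_or]
  have hNy : ∀ v, v ∈ Ny ↔ G.Adj y v ∧ v ≠ x ∧ ¬ G.Adj x v := by
    intro v
    simp only [hNydef, Nset, mem_sdiff, mem_insert, mem_neighborFinset, not_or]
  have hxNx : x ∉ Nx := fun hh => G.loopless.irrefl x ((hNx x).mp hh).1
  have hyNx : y ∉ Nx := fun hh => ((hNx y).mp hh).2.1 rfl
  have hx0Nx : x₀ ∉ Nx := fun hh => ((hNx x₀).mp hh).2.2 hyx0
  have hyNy : y ∉ Ny := fun hh => G.loopless.irrefl y ((hNy y).mp hh).1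
  have hxNy : x ∉ Ny := fun hh => ((hNy x).mp hh).2.1 rfl
  have hx0Ny : x₀ ∉ Ny := fun hh => ((hNy x₀).mp hh).2.2 hxx0
  -- neighborhood characterizations
  have hΓx : ∀ u, G.Adj x u ↔ (u = y ∨ u = x₀ ∨ u ∈ Nx) := by
    intro u
    constructor
    · intro h1
      by_cases h2 : u = y
      · exact Or.inl h2
      by_cases h3 : G.Adj y u
      · exact Or.inr (Or.inl (hD u h1 h3))
      · exact Or.inr (Or.inr ((hNx u).mpr ⟨h1, h2, h3⟩))
    · rintro (rfl | rfl | hu)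
      · exact hxy
      · exact hxx0
      · exact ((hNx u).mp hu).1
  have hΓy : ∀ v, G.Adj y v ↔ (v = x ∨ v = x₀ ∨ v ∈ Ny) := by
    intro v
    constructor
    · intro h1
      by_cases h2 : v = x
      · exact Or.inl h2
      by_cases h3 : G.Adj x v
      · exact Or.inr (Or.inl (hD v h3 h1))
      · exact Or.inr (Or.inr ((hNy v).mpr ⟨h1, h2, h3⟩))
    · rintro (rfl | rfl | hv)
      · exact hxy.symm
      · exact hyx0
      · exact ((hNy v).mp hv).1
  -- degree facts
  have hdegx : (G.neighborFinset x).card = d := by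
    rw [G.card_neighborFinset_eq_degree]; exact hreg x
  have hd2 : 2 ≤ d := by
    have hsub : ({y, x₀} : Finset V) ⊆ G.neighborFinset x := by
      intro z hz
      rw [mem_insert, mem_singleton] at hz
      rw [mem_neighborFinset]
      rcases hz with rfl | rfl
      · exact hxy
      · exact hxx0
    have := card_le_card hsub
    rwa [card_insert_of_notMem (by simpa using hynex0), card_singleton, hdegx] at this
  -- each u ∈ Nx has exactly b - 1 neighbors in Ny
  have hub : ∀ u ∈ Nx, ((Ny.filter (fun v => G.Adj u v)).card) = b - 1 := by
    intro u hu
    obtain ⟨h1, h2, h3⟩ := (hNx u).mp hu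
    have hdist : G.dist u y = 2 := by
      have hle : G.dist u y ≤ 2 := by
        have := G.dist_le (Walk.cons h1.symm (Walk.cons hxy Walk.nil))
        simpa using this
      have hne0 : G.dist u y ≠ 0 := by
        rw [Ne, SimpleGraph.dist_eq_zero_iff_eq_or_not_reachable]
        push_neg
        exact ⟨h2, ⟨Walk.cons h1.symm (Walk.cons hxy Walk.nil)⟩⟩
      have hne1 : G.dist u y ≠ 1 := by
        rw [Ne, SimpleGraph.dist_eq_one_iff_adj]
        intro hh; exact h3 hh.symm
      omega
    have hcard : (G.neighborFinset u ∩ G.neighborFinset y).card = b := hβ u y hdist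
    have hset : G.neighborFinset u ∩ G.neighborFinset y
        = insert x (Ny.filter (fun v => G.Adj u v)) := by
      ext v
      simp only [mem_inter, mem_neighborFinset, mem_insert, mem_filter]
      constructor
      · rintro ⟨hv1, hv2⟩
        by_cases hvx : v = x
        · exact Or.inl hvx
        · refine Or.inr ⟨(hNy v).mpr ⟨hv2, hvx, ?_⟩, hv1⟩
          intro hxv
          have : v = x₀ := hD v hxv hv2
          exact hx0nadj u h1 h2 (this ▸ hv1.symm)
      · rintro (rfl | ⟨hv1, hv2⟩)
        · exact ⟨h1.symm, hxy.symm⟩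
        · exact ⟨hv2, ((hNy v).mp hv1).1⟩
    rw [hset, card_insert_of_notMem (by simp [hxNy])] at hcard
    omega
  -- each v ∈ Ny has exactly b - 1 neighbors in Nx
  have hvb : ∀ v ∈ Ny, ((Nx.filter (fun u => G.Adj u v)).card) = b - 1 := by
    intro v hv
    obtain ⟨h1, h2, h3⟩ := (hNy v).mp hv
    have hdist : G.dist v x = 2 := by
      have hle : G.dist v x ≤ 2 := by
        have := G.dist_le (Walk.cons h1.symm (Walk.cons hxy.symm Walk.nil))
        simpa using this
      have hne0 : G.dist v x ≠ 0 := by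
        rw [Ne, SimpleGraph.dist_eq_zero_iff_eq_or_not_reachable]
        push_neg
        exact ⟨h2, ⟨Walk.cons h1.symm (Walk.cons hxy.symm Walk.nil)⟩⟩
      have hne1 : G.dist v x ≠ 1 := by
        rw [Ne, SimpleGraph.dist_eq_one_iff_adj]
        intro hh; exact h3 hh.symm
      omega
    have hcard : (G.neighborFinset v ∩ G.neighborFinset x).card = b := hβ v x hdist
    have hset : G.neighborFinset v ∩ G.neighborFinset x
        = insert y (Nx.filter (fun u => G.Adj u v)) := by
      ext u
      simp only [mem_inter, mem_neighborFinset, mem_insert, mem_filter]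
      constructor
      · rintro ⟨hu1, hu2⟩
        by_cases huy : u = y
        · exact Or.inl huy
        · refine Or.inr ⟨(hNx u).mpr ⟨hu2, huy, ?_⟩, hu1.symm⟩
          intro hyu
          have : u = x₀ := hD u hu2 hyu
          exact hy0nadj v h1 h2 (this ▸ hu1.symm)
      · rintro (rfl | ⟨hu1, hu2⟩)
        · exact ⟨h1.symm, hxy⟩
        · exact ⟨hu2.symm, ((hNx u).mp hu1).1⟩
    rw [hset, card_insert_of_notMem (by simp [hyNx])] at hcard
    omega
  -- card of Nx
  have hNxcard : Nx.card = d - 2 := by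
    have hset : Nx = G.neighborFinset x \ {y, x₀} := by
      ext u
      simp only [mem_sdiff, mem_insert, mem_singleton, mem_neighborFinset, hNx, not_or]
      constructor
      · rintro ⟨h1, h2, h3⟩
        exact ⟨h1, h2, fun hh => h3 (hh ▸ hyx0)⟩
      · rintro ⟨h1, h2, h3⟩
        refine ⟨h1, h2, fun hyu => h3 (hD u h1 hyu)⟩
    have hsub : ({y, x₀} : Finset V) ⊆ G.neighborFinset x := by
      intro z hz
      rw [mem_insert, mem_singleton] at hz
      rw [mem_neighborFinset]
      rcases hz with rfl | rfl
      · exact hxy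
      · exact hxx0
    rw [hset, card_sdiff_of_subset hsub, hdegx, card_insert_of_notMem (by simpa using hynex0),
      card_singleton]
  -- numeric facts
  have hd0 : (0 : ℝ) < (d : ℝ) + 1 := by positivity
  have hp0 : 0 ≤ p := by rw [hp]; positivity
  have hb1 : (0 : ℝ) < (b : ℝ) - 1 := by
    have : (2 : ℝ) ≤ (b : ℝ) := by exact_mod_cast hb
    linarith
  have hq0 : 0 ≤ q := by rw [hq]; positivity
  have hbcast : ((b - 1 : ℕ) : ℝ) = (b : ℝ) - 1 := by
    have : 1 ≤ b := hb.le
    push_cast [this]; ring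
  have hqb : (p * q) * ((b - 1 : ℕ) : ℝ) = p := by
    rw [hbcast, hq, mul_assoc]
    field_simp
  -- the transport plan
  set π : V → V → ℝ := fun u v =>
    (if u = v ∧ (u = x ∨ u = y ∨ u = x₀) then p else 0) +
    (if u ∈ Nx ∧ v ∈ Ny ∧ G.Adj u v then p * q else 0) with hπ
  have hπ0 : ∀ u v, 0 ≤ π u v := by
    intro u v
    simp only [hπ]
    refine add_nonneg ?_ ?_ <;> split_ifs <;>
      first | exact le_rfl | exact hp0 | exact mul_nonneg hp0 hq0
  -- row sums
  have hrow1 : ∀ u : V, ∑ v, (if u = v ∧ (u = x ∨ u = y ∨ u = x₀) then p else 0)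
      = if (u = x ∨ u = y ∨ u = x₀) then p else 0 := by
    intro u
    by_cases hPu : (u = x ∨ u = y ∨ u = x₀)
    · simp [hPu, Finset.sum_ite_eq]
    · simp [hPu]
  have hrow2 : ∀ u : V, ∑ v, (if u ∈ Nx ∧ v ∈ Ny ∧ G.Adj u v then p * q else 0)
      = if u ∈ Nx then p else 0 := by
    intro u
    by_cases hu : u ∈ Nx
    · simp only [hu, true_and, if_true]
      have hflt : (univ.filter (fun v => v ∈ Ny ∧ G.Adj u v))
          = Ny.filter (fun v => G.Adj u v) := by
        ext v; simp [mem_filter]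
      rw [← Finset.sum_filter, hflt, Finset.sum_const, hub u hu, nsmul_eq_mul, mul_comm, hqb]
    · simp [hu]
  have hcol1 : ∀ v : V, ∑ u, (if u = v ∧ (u = x ∨ u = y ∨ u = x₀) then p else 0)
      = if (v = x ∨ v = y ∨ v = x₀) then p else 0 := by
    intro v
    have heq : ∀ u : V, (if u = v ∧ (u = x ∨ u = y ∨ u = x₀) then p else 0)
        = (if u = v ∧ (v = x ∨ v = y ∨ v = x₀) then p else 0) := by
      intro u
      by_cases huv : u = v
      · subst huv; rfl
      · simp [huv]
    rw [Finset.sum_congr rfl (fun u _ => heq u)]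
    by_cases hPv : (v = x ∨ v = y ∨ v = x₀)
    · simp [hPv, Finset.sum_ite_eq']
    · simp [hPv]
  have hcol2 : ∀ v : V, ∑ u, (if u ∈ Nx ∧ v ∈ Ny ∧ G.Adj u v then p * q else 0)
      = if v ∈ Ny then p else 0 := by
    intro v
    by_cases hv : v ∈ Ny
    · have heq : ∀ u : V, (if u ∈ Nx ∧ v ∈ Ny ∧ G.Adj u v then p * q else 0)
          = (if u ∈ Nx ∧ G.Adj u v then p * q else 0) := by
        intro u; simp [hv]
      rw [Finset.sum_congr rfl (fun u _ => heq u)]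
      have hflt : (univ.filter (fun u => u ∈ Nx ∧ G.Adj u v))
          = Nx.filter (fun u => G.Adj u v) := by
        ext u; simp [mem_filter]
      rw [← Finset.sum_filter, hflt, Finset.sum_const, hvb v hv, nsmul_eq_mul, mul_comm, hqb]
      simp [hv]
    · simp [hv]
  -- degree rewriting for muMeasure
  have hstep : (1 - p) / (d : ℝ) = p := by
    have hd0' : (0 : ℝ) < (d : ℝ) := by
      have : 2 ≤ (d : ℝ) := by exact_mod_cast hd2
      linarith
    rw [hp]
    field_simp
    ring
  have hdegxr : ((G.degree x : ℕ) : ℝ) = (d : ℝ) := by exact_mod_cast congrArg Nat.cast (hreg x)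
  have hdegyr : ((G.degree y : ℕ) : ℝ) = (d : ℝ) := by exact_mod_cast congrArg Nat.cast (hreg y)
  -- marginals match the measures
  have hmux : ∀ u : V, (if (u = x ∨ u = y ∨ u = x₀) then p else 0)
      + (if u ∈ Nx then p else 0) = muMeasure G p x u := by
    intro u
    unfold muMeasure
    by_cases h1 : u = x
    · subst h1; simp [hxNx]
    · by_cases h2 : G.Adj x u
      · rcases (hΓx u).mp h2 with rfl | rfl | hu
        · simp [h1, h2, hdegxr, hstep, hyNx]
        · simp [h1, h2, hdegxr, hstep, hx0Nx]
        · have hne_y : u ≠ y := ((hNx u).mp hu).2.1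
          have hne_x0 : u ≠ x₀ := fun hh => hx0Nx (hh ▸ hu)
          simp [h1, h2, hne_y, hne_x0, hu, hdegxr, hstep]
      · have hnot : ¬ (u = x ∨ u = y ∨ u = x₀) := by
          rintro (rfl | rfl | rfl)
          · exact h1 rfl
          · exact h2 hxy
          · exact h2 hxx0
        have hnN : u ∉ Nx := fun hh => h2 ((hNx u).mp hh).1
        rw [if_neg hnot, if_neg hnN, if_neg h1, if_neg h2]
        norm_num
  have hmuy : ∀ v : V, (if (v = x ∨ v = y ∨ v = x₀) then p else 0)
      + (if v ∈ Ny then p else 0) = muMeasure G p y v := by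
    intro v
    unfold muMeasure
    by_cases h1 : v = y
    · rw [h1]
      have hyx : y ≠ x := hxy.ne'
      simp [hyNy, hyx]
    · by_cases h2 : G.Adj y v
      · rcases (hΓy v).mp h2 with rfl | rfl | hv
        · simp [h1, h2, hdegyr, hstep, hxNy]
        · simp [h1, h2, hdegyr, hstep, hx0Ny]
        · have hne_x : v ≠ x := ((hNy v).mp hv).2.1
          have hne_x0 : v ≠ x₀ := fun hh => hx0Ny (hh ▸ hv)
          simp [h1, h2, hne_x, hne_x0, hv, hdegyr, hstep]
      · have hnot : ¬ (v = x ∨ v = y ∨ v = x₀) := by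
          rintro (rfl | rfl | rfl)
          · exact h2 hxy.symm
          · exact h1 rfl
          · exact h2 hyx0
        have hnN : v ∉ Ny := fun hh => h2 ((hNy v).mp hh).1
        rw [if_neg hnot, if_neg hnN, if_neg h1, if_neg h2]
        norm_num
  have hplan : IsTransportPlan (muMeasure G p x) (muMeasure G p y) π := by
    refine ⟨hπ0, fun u => ?_, fun v => ?_⟩
    · rw [hπ]
      simp only
      rw [Finset.sum_add_distrib, hrow1, hrow2, hmux]
    · rw [hπ]
      simp only
      rw [Finset.sum_add_distrib, hcol1, hcol2, hmuy]
  -- the cost of the plan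
  have hcost : ∑ u, ∑ v, (G.dist u v : ℝ) * π u v = ((d - 2 : ℕ) : ℝ) * p := by
    have hterm : ∀ u v : V, (G.dist u v : ℝ) * π u v
        = (if u ∈ Nx ∧ v ∈ Ny ∧ G.Adj u v then p * q else 0) := by
      intro u v
      rw [hπ]
      simp only
      rw [mul_add]
      by_cases huv : u = v
      · subst huv
        have : ¬ (u ∈ Nx ∧ u ∈ Ny ∧ G.Adj u u) := fun hh => G.loopless.irrefl u hh.2.2
        simp [this, SimpleGraph.dist_self]
      · by_cases hc : u ∈ Nx ∧ v ∈ Ny ∧ G.Adj u v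
        · have hd1 : G.dist u v = 1 := SimpleGraph.dist_eq_one_iff_adj.mpr hc.2.2
          simp [huv, hc, hd1]
        · simp [huv, hc]
    rw [Finset.sum_congr rfl (fun u _ => Finset.sum_congr rfl (fun v _ => hterm u v))]
    rw [Finset.sum_congr rfl (fun u _ => hrow2 u)]
    have hflt : (univ.filter (fun u => u ∈ Nx)) = Nx := by ext u; simp
    rw [← Finset.sum_filter, hflt, Finset.sum_const, nsmul_eq_mul, hNxcard]
  -- conclude
  have hmem : ((d - 2 : ℕ) : ℝ) * p ∈ {c : ℝ | ∃ pi,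
      IsTransportPlan (muMeasure G p x) (muMeasure G p y) pi ∧
      c = ∑ u, ∑ v, (G.dist u v : ℝ) * pi u v} := ⟨π, hplan, hcost.symm⟩
  have hbdd : BddBelow {c : ℝ | ∃ pi,
      IsTransportPlan (muMeasure G p x) (muMeasure G p y) pi ∧
      c = ∑ u, ∑ v, (G.dist u v : ℝ) * pi u v} := by
    refine ⟨0, fun c hc => ?_⟩
    obtain ⟨pi, hpi, rfl⟩ := hc
    apply Finset.sum_nonneg
    intro u _
    apply Finset.sum_nonneg
    intro v _
    exact mul_nonneg (by positivity) (hpi.1 u v)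
  have hW1 : W1 G (muMeasure G p x) (muMeasure G p y) ≤ ((d - 2 : ℕ) : ℝ) * p :=
    csInf_le hbdd hmem
  refine hW1.trans ?_
  have hcast : ((d - 2 : ℕ) : ℝ) = (d : ℝ) - 2 := by
    push_cast [hd2]; ring
  rw [hcast, hp, mul_one_div]
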